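/- Let α > 0, κ > 0 and β, η ∈ ℝ, and define g(d) = log(1 + αd) + (καd² − (β+η)d)/(1 + αd) for real d with 1 + αd > 0. If 4κ(κ + β + η) + α² ≤ 0, then g is monotone nondecreasing on the interval (−1/α, ∞). -/

import Mathlib

theorem stmt_2 (α κ β η : ℝ) (hα : 0 < α) (hκ : 0 < κ)
    (h : 4 * κ * (κ + β + η) + α ^ 2 ≤ 0) :
    MonotoneOn
      (fun d : ℝ => Real.log (1 + α * d) + (κ * α * d ^ 2 - (β + η) * d) / (1 + α * d))
      (Set.Ioi (-(1 / α))) := by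
  have hu : ∀ x ∈ Set.Ioi (-(1 / α)), 0 < 1 + α * x := by
    intro x hx
    have hx' : -(1 / α) < x := hx
    have := mul_lt_mul_of_pos_left hx' hα
    have hne : α ≠ 0 := ne_of_gt hα
    have : α * (-(1 / α)) = -1 := by field_simp
    nlinarith [mul_lt_mul_of_pos_left hx' hα]
  have hd : ∀ x ∈ Set.Ioi (-(1 / α)),
      HasDerivAt (fun d : ℝ => Real.log (1 + α * d) + (κ * α * d ^ 2 - (β + η) * d) / (1 + α * d))
        (α / (1 + α * x) +
          ((κ * α * (2 * x) - (β + η)) * (1 + α * x) - (κ * α * x ^ 2 - (β + η) * x) * α)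
            / (1 + α * x) ^ 2) x := by
    intro x hx
    have hux := hu x hx
    have h1 : HasDerivAt (fun d : ℝ => 1 + α * d) α x := by
      simpa using ((hasDerivAt_id x).const_mul α).const_add 1
    have hlog : HasDerivAt (fun d : ℝ => Real.log (1 + α * d)) (α / (1 + α * x)) x :=
      h1.log (ne_of_gt hux)
    have hN : HasDerivAt (fun d : ℝ => κ * α * d ^ 2 - (β + η) * d)
        (κ * α * (2 * x) - (β + η)) x := by
      have := ((hasDerivAt_pow 2 x).const_mul (κ * α)).sub ((hasDerivAt_id x).const_mul (β + η))
      simpa [mul_comm, mul_assoc, mul_left_comm, Pi.sub_def] using this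
    exact hlog.add (hN.div h1 (ne_of_gt hux))
  apply monotoneOn_of_deriv_nonneg (convex_Ioi _)
  · exact fun x hx => (hd x hx).continuousAt.continuousWithinAt
  · rw [interior_Ioi]
    exact fun x hx => (hd x hx).differentiableAt.differentiableWithinAt
  · rw [interior_Ioi]
    intro x hx
    rw [(hd x hx).deriv]
    have hux := hu x hx
    have heq : α / (1 + α * x) +
        ((κ * α * (2 * x) - (β + η)) * (1 + α * x) - (κ * α * x ^ 2 - (β + η) * x) * α)
          / (1 + α * x) ^ 2
        = (κ * α ^ 2 * x ^ 2 + (α ^ 2 + 2 * κ * α) * x + (α - (β + η))) / (1 + α * x) ^ 2 := by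
      field_simp
      ring
    rw [heq]
    apply div_nonneg _ (by positivity)
    nlinarith [sq_nonneg (2 * κ * α * x + α + 2 * κ), sq_nonneg (α * x), hα.le, hκ.le]
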